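/- For A = exp(ω̃) with ω ∈ ℝ³, the skew-symmetric part satisfies A - Aᵀ = 2 (sin‖ω‖/‖ω‖) ω̃ (for ω ≠ 0); consequently, if 0 < ‖ω‖ < π, then ω̃ = (‖ω‖ / (2 sin‖ω‖)) (A - Aᵀ), i.e. the SO(3)-logarithm formula recovers ω̃ from A. -/

import Mathlib

open Matrix Real

noncomputable def norm3 (ω : Fin 3 → ℝ) : ℝ := Real.sqrt (ω 0 ^ 2 + ω 1 ^ 2 + ω 2 ^ 2)

def skew (ω : Fin 3 → ℝ) : Matrix (Fin 3) (Fin 3) ℝ :=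
  !![0, -ω 2, ω 1; ω 2, 0, -ω 0; -ω 1, ω 0, 0]

lemma skew_transpose (ω : Fin 3 → ℝ) : (skew ω)ᵀ = -skew ω := by
  ext i j; fin_cases i <;> fin_cases j <;> simp [skew]

lemma skew_cube (ω : Fin 3 → ℝ) :
    skew ω ^ 3 = (-(ω 0 ^ 2 + ω 1 ^ 2 + ω 2 ^ 2)) • skew ω := by
  ext i j
  fin_cases i <;> fin_cases j <;>
    simp [skew, pow_succ, Matrix.mul_apply, Fin.sum_univ_succ] <;> ring

lemma norm3_sq (ω : Fin 3 → ℝ) : norm3 ω ^ 2 = ω 0 ^ 2 + ω 1 ^ 2 + ω 2 ^ 2 := by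
  rw [norm3, Real.sq_sqrt]; positivity

lemma skew_cube' (ω : Fin 3 → ℝ) : skew ω ^ 3 = (-(norm3 ω ^ 2)) • skew ω := by
  rw [norm3_sq]; exact skew_cube ω

lemma skew_pow_odd (ω : Fin 3 → ℝ) (k : ℕ) :
    skew ω ^ (2 * k + 1) = ((-(norm3 ω ^ 2)) ^ k) • skew ω := by
  induction k with
  | zero => simp
  | succ k ih =>
    calc skew ω ^ (2 * (k + 1) + 1) = skew ω ^ (2 * k + 1) * skew ω ^ 2 := by
          rw [show 2 * (k + 1) + 1 = (2 * k + 1) + 2 by ring, pow_add]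
      _ = ((-(norm3 ω ^ 2)) ^ k) • (skew ω * skew ω ^ 2) := by
          rw [ih, smul_mul_assoc]
      _ = ((-(norm3 ω ^ 2)) ^ k) • (skew ω ^ 3) := by rw [← pow_succ']
      _ = ((-(norm3 ω ^ 2)) ^ (k + 1)) • skew ω := by
          rw [skew_cube', smul_smul, pow_succ]; ring_nf

theorem so3_log (ω : Fin 3 → ℝ) (h0 : 0 < norm3 ω) (hπ : norm3 ω < Real.pi) :
    NormedSpace.exp (skew ω) - (NormedSpace.exp (skew ω))ᵀ
        = (2 * Real.sin (norm3 ω) / norm3 ω) • skew ω ∧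
      skew ω = (norm3 ω / (2 * Real.sin (norm3 ω))) •
        (NormedSpace.exp (skew ω) - (NormedSpace.exp (skew ω))ᵀ) := by
  letI : NormedRing (Matrix (Fin 3) (Fin 3) ℝ) := Matrix.linftyOpNormedRing
  letI : NormedAlgebra ℝ (Matrix (Fin 3) (Fin 3) ℝ) := Matrix.linftyOpNormedAlgebra
  set θ := norm3 ω with hθ
  have hθ0 : θ ≠ 0 := ne_of_gt h0
  have hsin : 0 < Real.sin θ := Real.sin_pos_of_pos_of_lt_pi h0 hπ
  set S := skew ω with hS
  -- step 1: transpose of exp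
  have htr : (NormedSpace.exp S)ᵀ = NormedSpace.exp (-S) := by
    rw [← skew_transpose, ← hS]
    exact (Matrix.exp_transpose S).symm
  -- HasSum for exp S - exp (-S)
  have h1 : HasSum (fun n : ℕ => ((n.factorial : ℝ)⁻¹ • S ^ n) - ((n.factorial : ℝ)⁻¹ • (-S) ^ n))
      (NormedSpace.exp S - NormedSpace.exp (-S)) :=
    (NormedSpace.exp_series_hasSum_exp' (𝕂 := ℝ) S).sub (NormedSpace.exp_series_hasSum_exp' (𝕂 := ℝ) (-S))
  -- HasSum for the odd-summed series
  have hc : HasSum (fun k : ℕ => (2 / θ) * ((-1) ^ k * θ ^ (2 * k + 1) / ((2 * k + 1).factorial : ℝ)))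
      ((2 / θ) * Real.sin θ) := (Real.hasSum_sin θ).mul_left _
  have hc' : HasSum (fun k : ℕ =>
      ((2 / θ) * ((-1) ^ k * θ ^ (2 * k + 1) / ((2 * k + 1).factorial : ℝ))) • S)
      (((2 / θ) * Real.sin θ) • S) := hc.smul_const S
  -- rewrite odd series
  have hodd : ∀ k : ℕ, (fun n : ℕ => ((n.factorial : ℝ)⁻¹ • S ^ n) - ((n.factorial : ℝ)⁻¹ • (-S) ^ n)) (2 * k + 1)
      = ((2 / θ) * ((-1) ^ k * θ ^ (2 * k + 1) / ((2 * k + 1).factorial : ℝ))) • S := by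
    intro k
    have hop : Odd (2 * k + 1) := odd_two_mul_add_one k
    beta_reduce
    rw [hop.neg_pow, smul_neg, sub_neg_eq_add, ← two_smul ℝ, smul_smul,
      skew_pow_odd ω k, ← hS, smul_smul]
    congr 1
    have : (-(θ ^ 2)) ^ k = (-1 : ℝ) ^ k * θ ^ (2 * k) := by
      rw [neg_pow, ← pow_mul]
    rw [this]
    field_simp
    ring
  have hvan : ∀ n ∉ Set.range (fun k : ℕ => 2 * k + 1),
      (fun n : ℕ => ((n.factorial : ℝ)⁻¹ • S ^ n) - ((n.factorial : ℝ)⁻¹ • (-S) ^ n)) n = 0 := by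
    intro n hn
    have : Even n := by
      rcases Nat.even_or_odd n with h | h
      · exact h
      · obtain ⟨m, hm⟩ := h
        exact absurd ⟨m, hm.symm⟩ hn
    beta_reduce
    rw [this.neg_pow]; simp
  have hinj : Function.Injective (fun k : ℕ => 2 * k + 1) := by
    intro a b hab
    simpa using hab
  have h2 : HasSum (fun n : ℕ => ((n.factorial : ℝ)⁻¹ • S ^ n) - ((n.factorial : ℝ)⁻¹ • (-S) ^ n))
      (((2 / θ) * Real.sin θ) • S) := by
    refine (Function.Injective.hasSum_iff hinj hvan).mp ?_
    have he : ((fun n : ℕ => ((n.factorial : ℝ)⁻¹ • S ^ n) - ((n.factorial : ℝ)⁻¹ • (-S) ^ n)) ∘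
        (fun k : ℕ => 2 * k + 1)) = fun k : ℕ =>
        ((2 / θ) * ((-1) ^ k * θ ^ (2 * k + 1) / ((2 * k + 1).factorial : ℝ))) • S :=
      funext fun k => hodd k
    rw [he]
    exact hc'
  have hmain : NormedSpace.exp S - (NormedSpace.exp S)ᵀ
      = (2 * Real.sin θ / θ) • S := by
    rw [htr, h1.unique h2]
    congr 1
    ring
  refine ⟨hmain, ?_⟩
  rw [hmain, smul_smul]
  have : θ / (2 * Real.sin θ) * (2 * Real.sin θ / θ) = 1 := by
    field_simp
  rw [this, one_smul]
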